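/- Let K ∈ ℝ^{m×n} and x₁ ∈ ℝⁿ be such that there exists z ∈ ℝ^m with DᵀD̂x₁ = Kᵀz, where Dᵀ(p,q) = Dhᵀp + Dvᵀq for (p,q) ∈ ℝ^{2n}. Let x₂ ∈ ℝⁿ satisfy Kx₂ = Kx₁ and x₂ ∉ S₁, where S₁ = {v ∈ ℝⁿ : |Dv|_i = 0 for all i with |Dx₁|_i = 0}. Then ‖Dx₁‖_{2,1} < ‖Dx₂‖_{2,1}. -/
import Mathlib


open Matrix Finset

/-- Gradient magnitude: `|Dx|_i = sqrt((Dh x)_i² + (Dv x)_i²)`. -/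
noncomputable def gMag {n : ℕ} (Dh Dv : Matrix (Fin n) (Fin n) ℝ)
    (x : Fin n → ℝ) (i : Fin n) : ℝ :=
  Real.sqrt ((Dh.mulVec x i) ^ 2 + (Dv.mulVec x i) ^ 2)

/-- Horizontal component of the normalized gradient `D̂x`. -/
noncomputable def nGradH {n : ℕ} (Dh Dv : Matrix (Fin n) (Fin n) ℝ)
    (x : Fin n → ℝ) (i : Fin n) : ℝ :=
  if gMag Dh Dv x i = 0 then 1 / 2 else Dh.mulVec x i / gMag Dh Dv x i

/-- Vertical component of the normalized gradient `D̂x`. -/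
noncomputable def nGradV {n : ℕ} (Dh Dv : Matrix (Fin n) (Fin n) ℝ)
    (x : Fin n → ℝ) (i : Fin n) : ℝ :=
  if gMag Dh Dv x i = 0 then 1 / 2 else Dv.mulVec x i / gMag Dh Dv x i

/-- `S₁ = {v ∈ ℝⁿ : |Dv|_i = 0 for all i with |Dx₁|_i = 0}`. -/
def S1 {n : ℕ} (Dh Dv : Matrix (Fin n) (Fin n) ℝ) (x₁ : Fin n → ℝ) :
    Set (Fin n → ℝ) :=
  {v | ∀ i, gMag Dh Dv x₁ i = 0 → gMag Dh Dv v i = 0}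

private lemma cs2 (a b c d : ℝ) :
    a * c + b * d ≤ Real.sqrt (a ^ 2 + b ^ 2) * Real.sqrt (c ^ 2 + d ^ 2) := by
  have hs : Real.sqrt (a ^ 2 + b ^ 2) ^ 2 = a ^ 2 + b ^ 2 :=
    Real.sq_sqrt (by positivity)
  have ht : Real.sqrt (c ^ 2 + d ^ 2) ^ 2 = c ^ 2 + d ^ 2 :=
    Real.sq_sqrt (by positivity)
  have hs0 := Real.sqrt_nonneg (a ^ 2 + b ^ 2)
  have ht0 := Real.sqrt_nonneg (c ^ 2 + d ^ 2)
  nlinarith [sq_nonneg (a * d - b * c), mul_nonneg hs0 ht0,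
    sq_nonneg (Real.sqrt (a ^ 2 + b ^ 2) * Real.sqrt (c ^ 2 + d ^ 2) - (a * c + b * d))]

private lemma gMag_zero {n : ℕ} {Dh Dv : Matrix (Fin n) (Fin n) ℝ}
    {x : Fin n → ℝ} {i : Fin n} (h : gMag Dh Dv x i = 0) :
    Dh.mulVec x i = 0 ∧ Dv.mulVec x i = 0 := by
  unfold gMag at h
  have := Real.sqrt_eq_zero'.mp h
  constructor <;> nlinarith [sq_nonneg (Dh.mulVec x i), sq_nonneg (Dv.mulVec x i)]

/-- If `DᵀD̂x₁ = Kᵀz` for some `z`, `Kx₂ = Kx₁`, and `x₂ ∉ S₁`, then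
`‖Dx₁‖_{2,1} < ‖Dx₂‖_{2,1}`. -/
theorem stmt5 (m n : ℕ) (K : Matrix (Fin m) (Fin n) ℝ)
    (Dh Dv : Matrix (Fin n) (Fin n) ℝ) (x₁ x₂ : Fin n → ℝ)
    (hz : ∃ z : Fin m → ℝ,
      Dhᵀ.mulVec (nGradH Dh Dv x₁) + Dvᵀ.mulVec (nGradV Dh Dv x₁) = Kᵀ.mulVec z)
    (hK : K.mulVec x₂ = K.mulVec x₁)
    (hx₂ : x₂ ∉ S1 Dh Dv x₁) :
    ∑ i, gMag Dh Dv x₁ i < ∑ i, gMag Dh Dv x₂ i := by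
  obtain ⟨z, hz⟩ := hz
  set gh := nGradH Dh Dv x₁ with hgh
  set gv := nGradV Dh Dv x₁ with hgv
  have hdot : ∀ x : Fin n → ℝ,
      gh ⬝ᵥ Dh.mulVec x + gv ⬝ᵥ Dv.mulVec x
        = (Dhᵀ.mulVec gh + Dvᵀ.mulVec gv) ⬝ᵥ x := by
    intro x
    rw [add_dotProduct, Matrix.mulVec_transpose, Matrix.mulVec_transpose,
      ← Matrix.dotProduct_mulVec, ← Matrix.dotProduct_mulVec]
  have heq : gh ⬝ᵥ Dh.mulVec x₂ + gv ⬝ᵥ Dv.mulVec x₂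
      = gh ⬝ᵥ Dh.mulVec x₁ + gv ⬝ᵥ Dv.mulVec x₁ := by
    rw [hdot, hdot, hz, Matrix.mulVec_transpose, ← Matrix.dotProduct_mulVec,
      ← Matrix.dotProduct_mulVec, hK]
  have hsum : ∀ x : Fin n → ℝ, gh ⬝ᵥ Dh.mulVec x + gv ⬝ᵥ Dv.mulVec x
      = ∑ i, (gh i * Dh.mulVec x i + gv i * Dv.mulVec x i) := by
    intro x
    simp [dotProduct, Finset.sum_add_distrib]
  -- value at x₁
  have h1 : gh ⬝ᵥ Dh.mulVec x₁ + gv ⬝ᵥ Dv.mulVec x₁ = ∑ i, gMag Dh Dv x₁ i := by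
    rw [hsum]
    refine Finset.sum_congr rfl fun i _ => ?_
    by_cases h : gMag Dh Dv x₁ i = 0
    · obtain ⟨ha, hb⟩ := gMag_zero h
      simp [hgh, hgv, nGradH, nGradV, h, ha, hb]
    · have hr2 : gMag Dh Dv x₁ i ^ 2 = Dh.mulVec x₁ i ^ 2 + Dv.mulVec x₁ i ^ 2 :=
        Real.sq_sqrt (by positivity)
      rw [hgh, hgv]
      unfold nGradH nGradV
      rw [if_neg h, if_neg h]
      field_simp
      nlinarith [hr2]
  -- pointwise bound at x₂
  have hle : ∀ i, gh i * Dh.mulVec x₂ i + gv i * Dv.mulVec x₂ i ≤ gMag Dh Dv x₂ i := by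
    intro i
    have hs2 : gMag Dh Dv x₂ i ^ 2 = Dh.mulVec x₂ i ^ 2 + Dv.mulVec x₂ i ^ 2 :=
      Real.sq_sqrt (by positivity)
    have hs0 : 0 ≤ gMag Dh Dv x₂ i := Real.sqrt_nonneg _
    by_cases h : gMag Dh Dv x₁ i = 0
    · rw [hgh, hgv]
      unfold nGradH nGradV
      rw [if_pos h, if_pos h]
      nlinarith [sq_nonneg (Dh.mulVec x₂ i - Dv.mulVec x₂ i)]
    · have hr0 : 0 < gMag Dh Dv x₁ i :=
        lt_of_le_of_ne (Real.sqrt_nonneg _) (Ne.symm h)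
      rw [hgh, hgv]
      unfold nGradH nGradV
      rw [if_neg h, if_neg h]
      have hcs := cs2 (Dh.mulVec x₁ i) (Dv.mulVec x₁ i) (Dh.mulVec x₂ i) (Dv.mulVec x₂ i)
      have : Dh.mulVec x₁ i / gMag Dh Dv x₁ i * Dh.mulVec x₂ i
          + Dv.mulVec x₁ i / gMag Dh Dv x₁ i * Dv.mulVec x₂ i
          = (Dh.mulVec x₁ i * Dh.mulVec x₂ i + Dv.mulVec x₁ i * Dv.mulVec x₂ i)
            / gMag Dh Dv x₁ i := by ring
      rw [this, div_le_iff₀ hr0]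
      calc Dh.mulVec x₁ i * Dh.mulVec x₂ i + Dv.mulVec x₁ i * Dv.mulVec x₂ i
          ≤ gMag Dh Dv x₁ i * gMag Dh Dv x₂ i := hcs
        _ = gMag Dh Dv x₂ i * gMag Dh Dv x₁ i := by ring
  -- strict somewhere
  simp only [S1, Set.mem_setOf_eq, not_forall] at hx₂
  obtain ⟨i₀, h₀, hne⟩ := hx₂
  have hstrict : gh i₀ * Dh.mulVec x₂ i₀ + gv i₀ * Dv.mulVec x₂ i₀ < gMag Dh Dv x₂ i₀ := by
    have hs2 : gMag Dh Dv x₂ i₀ ^ 2 = Dh.mulVec x₂ i₀ ^ 2 + Dv.mulVec x₂ i₀ ^ 2 :=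
      Real.sq_sqrt (by positivity)
    have hs0 : 0 < gMag Dh Dv x₂ i₀ :=
      lt_of_le_of_ne (Real.sqrt_nonneg _) (Ne.symm hne)
    rw [hgh, hgv]
    unfold nGradH nGradV
    rw [if_pos h₀, if_pos h₀]
    nlinarith [sq_nonneg (Dh.mulVec x₂ i₀ - Dv.mulVec x₂ i₀)]
  have h2 : ∑ i, (gh i * Dh.mulVec x₂ i + gv i * Dv.mulVec x₂ i)
      < ∑ i, gMag Dh Dv x₂ i :=
    Finset.sum_lt_sum (fun i _ => hle i) ⟨i₀, Finset.mem_univ _, hstrict⟩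
  calc ∑ i, gMag Dh Dv x₁ i = gh ⬝ᵥ Dh.mulVec x₂ + gv ⬝ᵥ Dv.mulVec x₂ := by
        rw [heq, h1]
    _ = ∑ i, (gh i * Dh.mulVec x₂ i + gv i * Dv.mulVec x₂ i) := hsum x₂
    _ < ∑ i, gMag Dh Dv x₂ i := h2
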